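/- arXiv:1511.08595 — 5 statements merged into one kernel-verified Lean document; each statement's English description precedes it below -/
import Mathlib

section
/- Let ξ : ℤ → {0,1} be a non-periodic Toeplitz sequence with period structure (p_ℓ)_{ℓ≥1}, and let Ω be the associated odometer with Haar probability measure μ and distinguished element e. Then there exists a compact set W ⊆ Ω with W = cl(int(W)) (a proper window) such that {n ∈ ℤ : n·e ∈ W} = {n ∈ ℤ : ξ(n) = 1} and μ(∂W) = 1 − lim_{ℓ→∞} D(p_ℓ), where the limit exists because D(p_ℓ) is nondecreasing and bounded by 1. -/
open MeasureTheory Set Filter Topology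

noncomputable section

instance (n : ℕ) : TopologicalSpace (ZMod n) := ⊥
instance (n : ℕ) : DiscreteTopology (ZMod n) := ⟨rfl⟩
instance (n : ℕ) : MeasurableSpace (ZMod n) := ⊤

/-- The `p`-skeleton of a sequence `ξ : ℤ → {0,1}`:
the set of `p`-periodic positions of `ξ`. -/
def Per (ξ : ℤ → Fin 2) (p : ℕ) : Set ℤ := {k | ∀ n : ℤ, ξ (k + n * p) = ξ k}

/-- The density `D(p)` of the `p`-skeleton:
`D(p) = #(Per(p,ξ) ∩ [0, p-1]) / p`. -/
def skelDensity (ξ : ℤ → Fin 2) (p : ℕ) : ℝ :=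
  ((Per ξ p ∩ Set.Ico (0 : ℤ) (p : ℤ)).ncard : ℝ) / p

/-- `ξ` is a Toeplitz sequence: every position is periodic for some period `p ≥ 1`. -/
def IsToeplitz (ξ : ℤ → Fin 2) : Prop := ∀ k : ℤ, ∃ p : ℕ, 0 < p ∧ k ∈ Per ξ p

/-- `ξ` is non-periodic: no `p ≥ 1` is a period of the whole sequence. -/
def IsNonPeriodic (ξ : ℤ → Fin 2) : Prop := ∀ p : ℕ, 0 < p → ∃ k : ℤ, ξ (k + p) ≠ ξ k

/-- `(p ℓ)` is a period structure for `ξ`: the `p ℓ` are positive, each divides the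
next, and the `p ℓ`-skeletons exhaust `ℤ`. -/
def IsPeriodStructure (ξ : ℤ → Fin 2) (p : ℕ → ℕ) : Prop :=
  (∀ ℓ, 0 < p ℓ) ∧ (∀ ℓ, p ℓ ∣ p (ℓ + 1)) ∧ ∀ k : ℤ, ∃ ℓ, k ∈ Per ξ (p ℓ)

/-- The odometer associated with a scale `p`, i.e. the closed subgroup of
`∏ ℓ, ℤ/p ℓ ℤ` of sequences compatible under the canonical projections
(whenever `p ℓ ∣ p (ℓ+1)`, which holds for period structures). -/
def odometer (p : ℕ → ℕ) : AddSubgroup (Π ℓ, ZMod (p ℓ)) where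
  carrier := {x | ∀ ℓ, ∀ h : p ℓ ∣ p (ℓ + 1), ZMod.castHom h (ZMod (p ℓ)) (x (ℓ + 1)) = x ℓ}
  zero_mem' := by intro ℓ _; simp
  add_mem' := by intro a b ha hb ℓ h; simp only [Pi.add_apply, map_add, ha ℓ h, hb ℓ h]
  neg_mem' := by intro a ha ℓ h; simp only [Pi.neg_apply, map_neg, ha ℓ h]

/-- The distinguished element `e` of the odometer, whose `ℓ`-th coordinate is
`1 mod p ℓ`; its `n`-th multiple `n • e` has `ℓ`-th coordinate `n mod p ℓ`. -/
def odometerGen (p : ℕ → ℕ) : odometer p := ⟨fun _ => 1, fun _ _ => map_one _⟩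

/-- `A_s(ℓ) = {k mod p ℓ : k ∈ Per (p ℓ, ξ), ξ k = s} ⊆ ℤ/p ℓ ℤ`. -/
def Aset (ξ : ℤ → Fin 2) (p : ℕ → ℕ) (ℓ : ℕ) (s : Fin 2) : Set (ZMod (p ℓ)) :=
  {c | ∃ k : ℤ, k ∈ Per ξ (p ℓ) ∧ ξ k = s ∧ (k : ZMod (p ℓ)) = c}

/-- `U_ℓ = {x ∈ Ω : x ℓ ∈ A_1(ℓ)}`. -/
def UsetL (ξ : ℤ → Fin 2) (p : ℕ → ℕ) (ℓ : ℕ) : Set (odometer p) :=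
  {x | (x : Π ℓ, ZMod (p ℓ)) ℓ ∈ Aset ξ p ℓ 1}

/-- `V_ℓ = {x ∈ Ω : x ℓ ∈ A_0(ℓ)}`. -/
def VsetL (ξ : ℤ → Fin 2) (p : ℕ → ℕ) (ℓ : ℕ) : Set (odometer p) :=
  {x | (x : Π ℓ, ZMod (p ℓ)) ℓ ∈ Aset ξ p ℓ 0}

/-- `U = ⋃ ℓ, U_ℓ`. -/
def Uset (ξ : ℤ → Fin 2) (p : ℕ → ℕ) : Set (odometer p) := ⋃ ℓ, UsetL ξ p ℓ

/-- `V = ⋃ ℓ, V_ℓ`. -/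
def Vset (ξ : ℤ → Fin 2) (p : ℕ → ℕ) : Set (odometer p) := ⋃ ℓ, VsetL ξ p ℓ

/-- The window `W = cl(U)` constructed from `ξ`. -/
def Wset (ξ : ℤ → Fin 2) (p : ℕ → ℕ) : Set (odometer p) := closure (Uset ξ p)


open scoped ENNReal

section ToeplitzAux

variable {ξ : ℤ → Fin 2} {p : ℕ → ℕ}

lemma fin2_eq_of_ne {s t a : Fin 2} (h : s ≠ t) (ha : a ≠ t) : a = s := by
  revert s t a; decide

lemma fin2_cases (a : Fin 2) : a = 0 ∨ a = 1 := by revert a; decide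

lemma per_congr {q : ℕ} {k j : ℤ} (hk : k ∈ Per ξ q) (hjk : (q : ℤ) ∣ j - k) :
    j ∈ Per ξ q ∧ ξ j = ξ k := by
  obtain ⟨t, ht⟩ := hjk
  have hj : j = k + t * q := by linarith
  have h1 : ξ j = ξ k := by rw [hj]; exact hk t
  refine ⟨fun n => ?_, h1⟩
  have e : j + n * q = k + (t + n) * q := by rw [hj]; ring
  rw [e, hk (t + n), h1]

lemma per_dvd {q r : ℕ} (h : q ∣ r) {k : ℤ} (hk : k ∈ Per ξ q) : k ∈ Per ξ r := by
  obtain ⟨d, hd⟩ := h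
  intro n
  have e : k + n * r = k + (n * d) * q := by push_cast [hd]; ring
  rw [e]; exact hk (n * d)

lemma dvd_chain (hd : ∀ ℓ, p ℓ ∣ p (ℓ + 1)) {i m : ℕ} (h : i ≤ m) : p i ∣ p m := by
  induction h with
  | refl => exact dvd_rfl
  | step h ih => exact dvd_trans ih (hd _)

lemma odometer_spec (x : odometer p) (ℓ : ℕ) (h : p ℓ ∣ p (ℓ + 1)) :
    ZMod.castHom h (ZMod (p ℓ)) ((x : ∀ ℓ, ZMod (p ℓ)) (ℓ + 1)) = (x : ∀ ℓ, ZMod (p ℓ)) ℓ :=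
  x.2 ℓ h

lemma coord_eq (hd : ∀ ℓ, p ℓ ∣ p (ℓ + 1)) (x : odometer p) :
    ∀ {m i : ℕ}, i ≤ m → ∀ n : ℤ,
      (n : ZMod (p m)) = (x : ∀ ℓ, ZMod (p ℓ)) m → (n : ZMod (p i)) = (x : ∀ ℓ, ZMod (p ℓ)) i := by
  intro m
  induction m with
  | zero =>
    intro i hi n h
    have : i = 0 := Nat.le_zero.mp hi
    subst this; exact h
  | succ m ih =>
    intro i hi n h
    rcases Nat.eq_or_lt_of_le hi with he | hlt
    · subst he; exact h
    · have hi' : i ≤ m := Nat.lt_succ_iff.mp hlt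
      have hx := odometer_spec x m (hd m)
      have h' : (n : ZMod (p m)) = (x : ∀ ℓ, ZMod (p ℓ)) m := by
        rw [← hx, ← h, map_intCast]
      exact ih hi' n h'

lemma smul_gen_coord (p : ℕ → ℕ) (n : ℤ) (ℓ : ℕ) :
    ((n • odometerGen p : odometer p) : ∀ ℓ, ZMod (p ℓ)) ℓ = (n : ZMod (p ℓ)) := by
  have h : ((n • odometerGen p : odometer p) : ∀ ℓ, ZMod (p ℓ))
      = n • ((odometerGen p : odometer p) : ∀ ℓ, ZMod (p ℓ)) := rfl
  rw [h]
  show n • (1 : ZMod (p ℓ)) = (n : ZMod (p ℓ))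
  rw [zsmul_eq_mul, mul_one]

/-- `X_s(ℓ) = {x ∈ Ω : x ℓ ∈ A_s(ℓ)}`, so that `U_ℓ = X_1(ℓ)` and `V_ℓ = X_0(ℓ)`. -/
def XsetL (ξ : ℤ → Fin 2) (p : ℕ → ℕ) (s : Fin 2) (ℓ : ℕ) : Set (odometer p) :=
  {x | (x : Π ℓ, ZMod (p ℓ)) ℓ ∈ Aset ξ p ℓ s}

lemma isOpen_XsetL (s : Fin 2) (ℓ : ℕ) : IsOpen (XsetL ξ p s ℓ) :=
  ((continuous_apply ℓ).comp continuous_subtype_val).isOpen_preimage _ (isOpen_discrete _)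

lemma measurable_coord (ℓ : ℕ) : Measurable (fun x : odometer p => (x : ∀ ℓ, ZMod (p ℓ)) ℓ) :=
  (measurable_pi_apply ℓ).comp measurable_subtype_coe

lemma measurableSet_XsetL (s : Fin 2) (ℓ : ℕ) : MeasurableSet (XsetL ξ p s ℓ) :=
  measurable_coord ℓ trivial

lemma XsetL_subset_succ (hd : ∀ ℓ, p ℓ ∣ p (ℓ + 1)) (s : Fin 2) (ℓ : ℕ) :
    XsetL ξ p s ℓ ⊆ XsetL ξ p s (ℓ + 1) := by
  rintro x ⟨k, hkP, hks, hkc⟩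
  set j : ℤ := ZMod.cast ((x : ∀ ℓ, ZMod (p ℓ)) (ℓ + 1)) with hjdef
  have hj1 : (j : ZMod (p (ℓ + 1))) = (x : ∀ ℓ, ZMod (p ℓ)) (ℓ + 1) := ZMod.intCast_zmod_cast _
  have hj0 : (j : ZMod (p ℓ)) = (x : ∀ ℓ, ZMod (p ℓ)) ℓ := coord_eq hd x (Nat.le_succ ℓ) j hj1
  have hdvd : (p ℓ : ℤ) ∣ j - k := by
    have h2 : (k : ZMod (p ℓ)) = (j : ZMod (p ℓ)) := by rw [hj0, hkc]
    exact ((ZMod.intCast_eq_intCast_iff _ _ _).mp h2).dvd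
  obtain ⟨hjP, hjval⟩ := per_congr hkP hdvd
  exact ⟨j, per_dvd (hd ℓ) hjP, by rw [hjval, hks], hj1⟩

lemma XsetL_mono (hd : ∀ ℓ, p ℓ ∣ p (ℓ + 1)) (s : Fin 2) : Monotone (XsetL ξ p s) :=
  monotone_nat_of_le_succ (fun ℓ => XsetL_subset_succ hd s ℓ)

lemma XsetL_value {s t : Fin 2} {ℓ : ℕ} {x : odometer p}
    (hs : x ∈ XsetL ξ p s ℓ) (ht : x ∈ XsetL ξ p t ℓ) : s = t := by
  obtain ⟨k, hkP, hks, hkc⟩ := hs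
  obtain ⟨j, hjP, hjt, hjc⟩ := ht
  have hdvd : (p ℓ : ℤ) ∣ j - k := by
    have h2 : (k : ZMod (p ℓ)) = (j : ZMod (p ℓ)) := by rw [hkc, hjc]
    exact ((ZMod.intCast_eq_intCast_iff _ _ _).mp h2).dvd
  rw [← hks, ← hjt, (per_congr hkP hdvd).2]

lemma X_disjoint (hd : ∀ ℓ, p ℓ ∣ p (ℓ + 1)) {s t : Fin 2} (hst : s ≠ t) :
    (⋃ ℓ, XsetL ξ p s ℓ) ∩ (⋃ ℓ, XsetL ξ p t ℓ) = ∅ := by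
  ext x
  simp only [mem_inter_iff, mem_iUnion, mem_empty_iff_false, iff_false, not_and]
  rintro ⟨ℓ, hℓ⟩ ⟨m, hm⟩
  have h1 : x ∈ XsetL ξ p s (max ℓ m) := XsetL_mono hd s (le_max_left ℓ m) hℓ
  have h2 : x ∈ XsetL ξ p t (max ℓ m) := XsetL_mono hd t (le_max_right ℓ m) hm
  exact hst (XsetL_value h1 h2)

lemma cyl_mem (hd : ∀ ℓ, p ℓ ∣ p (ℓ + 1)) (x : odometer p) {O : Set (odometer p)}
    (hO : IsOpen O) (hx : x ∈ O) :
    ∃ m, ∀ y : odometer p,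
      (y : ∀ ℓ, ZMod (p ℓ)) m = (x : ∀ ℓ, ZMod (p ℓ)) m → y ∈ O := by
  obtain ⟨T, hT, hTO⟩ := isOpen_induced_iff.mp hO
  have hxT : (x : ∀ ℓ, ZMod (p ℓ)) ∈ T := by rw [← hTO] at hx; exact hx
  obtain ⟨I, u, hu, hsub⟩ := isOpen_pi_iff.mp hT _ hxT
  refine ⟨I.sup id, fun y hy => ?_⟩
  have : (y : ∀ ℓ, ZMod (p ℓ)) ∈ T := by
    apply hsub
    intro i hiI
    have hle : i ≤ I.sup id := Finset.le_sup (f := id) hiI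
    have hyi : (y : ∀ ℓ, ZMod (p ℓ)) i = (x : ∀ ℓ, ZMod (p ℓ)) i := by
      set n : ℤ := ZMod.cast ((x : ∀ ℓ, ZMod (p ℓ)) (I.sup id)) with hndef
      have hn : (n : ZMod (p (I.sup id))) = (x : ∀ ℓ, ZMod (p ℓ)) (I.sup id) :=
        ZMod.intCast_zmod_cast _
      have h1 := coord_eq hd x hle n hn
      have h2 := coord_eq hd y hle n (by rw [hn, ← hy])
      rw [← h1, ← h2]
    rw [hyi]
    exact (hu i hiI).2
  rw [← hTO]; exact this

lemma residue_good {s t : Fin 2} (hst : s ≠ t) {ℓ : ℕ} {c : ZMod (p ℓ)}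
    (hc : c ∉ Aset ξ p ℓ t) : ∃ n : ℤ, (n : ZMod (p ℓ)) = c ∧ ξ n = s := by
  by_contra hcon
  push_neg at hcon
  set n0 : ℤ := ZMod.cast c with hn0def
  have hn0 : (n0 : ZMod (p ℓ)) = c := ZMod.intCast_zmod_cast c
  have hall : ∀ j : ℤ, (j : ZMod (p ℓ)) = c → ξ j = t :=
    fun j hj => fin2_eq_of_ne hst.symm (hcon j hj)
  have hper : n0 ∈ Per ξ (p ℓ) := by
    intro m
    have h1 : ((n0 + m * (p ℓ) : ℤ) : ZMod (p ℓ)) = c := by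
      push_cast
      simp [hn0, ZMod.natCast_self]
    rw [hall _ h1, hall _ hn0]
  exact hc ⟨n0, hper, hall _ hn0, hn0⟩

lemma closure_Xunion (hpos : ∀ ℓ, 0 < p ℓ) (hd : ∀ ℓ, p ℓ ∣ p (ℓ + 1))
    (hex : ∀ k : ℤ, ∃ ℓ, k ∈ Per ξ (p ℓ)) {s t : Fin 2} (hst : s ≠ t) :
    closure (⋃ ℓ, XsetL ξ p s ℓ) = (⋃ ℓ, XsetL ξ p t ℓ)ᶜ := by
  apply Subset.antisymm
  · apply closure_minimal
    · intro x hx hxt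
      exact (Set.eq_empty_iff_forall_notMem.mp (X_disjoint hd hst) x) ⟨hx, hxt⟩
    · exact (isOpen_iUnion (fun ℓ => isOpen_XsetL t ℓ)).isClosed_compl
  · intro x hx
    rw [mem_closure_iff]
    intro O hO hxO
    obtain ⟨m, hm⟩ := cyl_mem hd x hO hxO
    have hc : (x : ∀ ℓ, ZMod (p ℓ)) m ∉ Aset ξ p m t := fun h => hx (mem_iUnion.mpr ⟨m, h⟩)
    obtain ⟨n, hnc, hns⟩ := residue_good hst hc
    obtain ⟨ℓ', hℓ'⟩ := hex n
    exact ⟨n • odometerGen p, hm _ (by rw [smul_gen_coord, hnc]), mem_iUnion.mpr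
      ⟨max m ℓ', ⟨n, per_dvd (dvd_chain hd (le_max_right m ℓ')) hℓ', hns,
        (smul_gen_coord p n _).symm⟩⟩⟩

lemma measurable_const_add' (c : odometer p) :
    Measurable (fun x : odometer p => c + x) := by
  have h : Measurable fun x : odometer p =>
      ((c : ∀ ℓ, ZMod (p ℓ)) + (x : ∀ ℓ, ZMod (p ℓ))) := by
    apply measurable_pi_lambda
    intro ℓ
    exact Measurable.comp (g := fun z : ZMod (p ℓ) => (c : ∀ ℓ, ZMod (p ℓ)) ℓ + z)
      (fun _ _ => trivial) (measurable_coord ℓ)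
  exact h.subtype_mk

lemma fiber_measure (hpos : ∀ ℓ, 0 < p ℓ)
    (μ : Measure (odometer p)) [μ.IsAddLeftInvariant] [IsProbabilityMeasure μ]
    (ℓ : ℕ) (c : ZMod (p ℓ)) :
    μ ((fun x : odometer p => (x : ∀ ℓ, ZMod (p ℓ)) ℓ) ⁻¹' {c}) = (p ℓ : ℝ≥0∞)⁻¹ := by
  haveI : NeZero (p ℓ) := ⟨(hpos ℓ).ne'⟩
  set π : odometer p → ZMod (p ℓ) := fun x => (x : ∀ ℓ, ZMod (p ℓ)) ℓ with hπ
  have key : ∀ c' : ZMod (p ℓ), μ (π ⁻¹' {c'}) = μ (π ⁻¹' {0}) := by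
    intro c'
    set n : ℤ := ZMod.cast c' with hndef
    have hn : (n : ZMod (p ℓ)) = c' := ZMod.intCast_zmod_cast c'
    set g : odometer p := n • odometerGen p with hgdef
    have hg : π g = c' := by rw [hπ]; simp only; rw [smul_gen_coord, hn]
    have hmap : μ.map (fun x => g + x) = μ := map_add_left_eq_self μ g
    have hpre : (fun x => g + x) ⁻¹' (π ⁻¹' {c'}) = π ⁻¹' {0} := by
      ext x
      simp only [mem_preimage, mem_singleton_iff, hπ]
      have hco : ((g + x : odometer p) : ∀ ℓ, ZMod (p ℓ)) ℓ
          = (g : ∀ ℓ, ZMod (p ℓ)) ℓ + (x : ∀ ℓ, ZMod (p ℓ)) ℓ := rfl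
      rw [hco]
      have hgc : (g : ∀ ℓ, ZMod (p ℓ)) ℓ = c' := hg
      rw [hgc]
      constructor
      · intro h; exact by rwa [add_eq_left] at h
      · intro h; rw [h, add_zero]
    calc μ (π ⁻¹' {c'}) = μ.map (fun x => g + x) (π ⁻¹' {c'}) := by rw [hmap]
      _ = μ ((fun x => g + x) ⁻¹' (π ⁻¹' {c'})) :=
          Measure.map_apply (measurable_const_add' g) (measurable_coord ℓ trivial)
      _ = μ (π ⁻¹' {0}) := by rw [hpre]
  haveI : Fintype (ZMod (p ℓ)) := ZMod.fintype _
  have hsum : ∑ c' : ZMod (p ℓ), μ (π ⁻¹' {c'}) = 1 := by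
    rw [← measure_univ (μ := μ)]
    have huniv : (univ : Set (odometer p)) = ⋃ c' ∈ (Finset.univ : Finset (ZMod (p ℓ))),
        π ⁻¹' {c'} := by
      ext x; simp
    rw [huniv, measure_biUnion_finset ?hd ?hm]
    case hd =>
      intro a _ b _ hab
      apply Set.disjoint_left.mpr
      intro x hx1 hx2
      exact hab (by rw [← hx1, ← hx2])
    case hm => exact fun c' _ => measurable_coord ℓ trivial
  have hcard : ∑ c' : ZMod (p ℓ), μ (π ⁻¹' {c'}) = (p ℓ : ℝ≥0∞) * μ (π ⁻¹' {0}) := by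
    rw [Finset.sum_congr rfl (fun c' _ => key c'), Finset.sum_const, Finset.card_univ,
      ZMod.card, nsmul_eq_mul]
  have hp0 : (p ℓ : ℝ≥0∞) ≠ 0 := by
    simp [(hpos ℓ).ne']
  have hpt : (p ℓ : ℝ≥0∞) ≠ ⊤ := ENNReal.natCast_ne_top _
  have h1 : (p ℓ : ℝ≥0∞) * μ (π ⁻¹' {0}) = 1 := by rw [← hcard, hsum]
  have h0 : μ (π ⁻¹' {0}) = (p ℓ : ℝ≥0∞)⁻¹ := by
    calc μ (π ⁻¹' {0}) = ((p ℓ : ℝ≥0∞)⁻¹ * (p ℓ : ℝ≥0∞)) * μ (π ⁻¹' {0}) := by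
          rw [ENNReal.inv_mul_cancel hp0 hpt, one_mul]
      _ = (p ℓ : ℝ≥0∞)⁻¹ * ((p ℓ : ℝ≥0∞) * μ (π ⁻¹' {0})) := by ring
      _ = (p ℓ : ℝ≥0∞)⁻¹ := by rw [h1, mul_one]
  rw [key c, h0]

lemma preimage_measure (hpos : ∀ ℓ, 0 < p ℓ)
    (μ : Measure (odometer p)) [μ.IsAddLeftInvariant] [IsProbabilityMeasure μ]
    (ℓ : ℕ) (S : Set (ZMod (p ℓ))) :
    μ ((fun x : odometer p => (x : ∀ ℓ, ZMod (p ℓ)) ℓ) ⁻¹' S)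
      = (S.ncard : ℝ≥0∞) * (p ℓ : ℝ≥0∞)⁻¹ := by
  haveI : NeZero (p ℓ) := ⟨(hpos ℓ).ne'⟩
  haveI : Fintype (ZMod (p ℓ)) := ZMod.fintype _
  set π : odometer p → ZMod (p ℓ) := fun x => (x : ∀ ℓ, ZMod (p ℓ)) ℓ with hπ
  have hfin : S.Finite := S.toFinite
  have hsplit : π ⁻¹' S = ⋃ c ∈ hfin.toFinset, π ⁻¹' {c} := by
    ext x; simp [Set.Finite.mem_toFinset]
  rw [hsplit, measure_biUnion_finset ?hd ?hm]
  case hd =>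
    intro a _ b _ hab
    apply Set.disjoint_left.mpr
    intro x hx1 hx2
    exact hab (by rw [← hx1, ← hx2])
  case hm => exact fun c' _ => measurable_coord ℓ trivial
  rw [Finset.sum_congr rfl (fun c' _ => fiber_measure hpos μ ℓ c'), Finset.sum_const,
    Set.ncard_eq_toFinset_card S hfin, nsmul_eq_mul]

lemma ncard_per_eq (hpos : ∀ ℓ, 0 < p ℓ) (ℓ : ℕ) :
    (Per ξ (p ℓ) ∩ Set.Ico (0 : ℤ) ((p ℓ : ℤ))).ncard
      = (Aset ξ p ℓ 0 ∪ Aset ξ p ℓ 1).ncard := by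
  have hppos : (0 : ℤ) < (p ℓ : ℤ) := by exact_mod_cast hpos ℓ
  have himg : (fun k : ℤ => (k : ZMod (p ℓ))) '' (Per ξ (p ℓ) ∩ Set.Ico (0 : ℤ) ((p ℓ : ℤ)))
      = Aset ξ p ℓ 0 ∪ Aset ξ p ℓ 1 := by
    ext c
    constructor
    · rintro ⟨k, ⟨hkP, _⟩, rfl⟩
      rcases fin2_cases (ξ k) with h | h
      · exact Or.inl ⟨k, hkP, h, rfl⟩
      · exact Or.inr ⟨k, hkP, h, rfl⟩
    · intro hc
      have hex : ∃ k : ℤ, k ∈ Per ξ (p ℓ) ∧ (k : ZMod (p ℓ)) = c := by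
        rcases hc with ⟨k, hkP, _, hkc⟩ | ⟨k, hkP, _, hkc⟩
        · exact ⟨k, hkP, hkc⟩
        · exact ⟨k, hkP, hkc⟩
      obtain ⟨k, hkP, hkc⟩ := hex
      set j : ℤ := k % (p ℓ : ℤ) with hjdef
      have hdvd : (p ℓ : ℤ) ∣ j - k := by
        refine ⟨-(k / (p ℓ : ℤ)), ?_⟩
        rw [hjdef, Int.emod_def]; ring
      obtain ⟨hjP, _⟩ := per_congr hkP hdvd
      refine ⟨j, ⟨hjP, ⟨Int.emod_nonneg k hppos.ne', Int.emod_lt_of_pos k hppos⟩⟩, ?_⟩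
      show (j : ZMod (p ℓ)) = c
      rw [hjdef, ZMod.intCast_mod, hkc]
  have hinj : Set.InjOn (fun k : ℤ => (k : ZMod (p ℓ)))
      (Per ξ (p ℓ) ∩ Set.Ico (0 : ℤ) ((p ℓ : ℤ))) := by
    intro a ha b hb hab
    have h1 : a % (p ℓ : ℤ) = b % (p ℓ : ℤ) := (ZMod.intCast_eq_intCast_iff' _ _ _).mp hab
    rw [Int.emod_eq_of_lt ha.2.1 ha.2.2, Int.emod_eq_of_lt hb.2.1 hb.2.2] at h1
    exact h1
  rw [← himg, Set.ncard_image_of_injOn hinj]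

end ToeplitzAux

/-- For a non-periodic Toeplitz sequence `ξ` with period structure
`(p ℓ)`, with `Ω` the associated odometer, `μ` its Haar probability measure and `e`
the distinguished element, there is a compact proper window `W ⊆ Ω` with
`{n : n • e ∈ W} = {n : ξ n = 1}` and `μ (∂W) = 1 - lim_ℓ D(p ℓ)`
(the limit existing since `D(p ℓ)` is nondecreasing and bounded by `1`). -/
theorem toeplitz_model_set (ξ : ℤ → Fin 2) (hT : IsToeplitz ξ) (hNP : IsNonPeriodic ξ)
    (p : ℕ → ℕ) (hps : IsPeriodStructure ξ p)
    (μ : Measure (odometer p)) (hμ : μ.IsAddHaarMeasure) (hμ1 : IsProbabilityMeasure μ) :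
    ∃ W : Set (odometer p), IsCompact W ∧ W = closure (interior W) ∧
      {n : ℤ | n • odometerGen p ∈ W} = {n : ℤ | ξ n = 1} ∧
      ∃ L : ℝ, Tendsto (fun ℓ => skelDensity ξ (p ℓ)) atTop (𝓝 L) ∧
        Monotone (fun ℓ => skelDensity ξ (p ℓ)) ∧ (∀ ℓ, skelDensity ξ (p ℓ) ≤ 1) ∧
        μ (frontier W) = ENNReal.ofReal (1 - L) := by
  classical
  obtain ⟨hpos, hd, hex⟩ := hps
  haveI := hμ
  haveI : ∀ ℓ, Fintype (ZMod (p ℓ)) := fun ℓ => @ZMod.fintype (p ℓ) ⟨(hpos ℓ).ne'⟩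
  haveI : ∀ ℓ, CompactSpace (ZMod (p ℓ)) := fun ℓ => Finite.compactSpace
  have hclosed : IsClosed ((odometer p : Set (∀ ℓ, ZMod (p ℓ)))) := by
    have heq : (odometer p : Set (∀ ℓ, ZMod (p ℓ)))
        = ⋂ ℓ, ⋂ (h : p ℓ ∣ p (ℓ + 1)),
            {x : ∀ ℓ, ZMod (p ℓ) | ZMod.castHom h (ZMod (p ℓ)) (x (ℓ + 1)) = x ℓ} := by
      ext x
      simp only [SetLike.mem_coe, mem_iInter, mem_setOf_eq]
      exact Iff.rfl
    rw [heq]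
    refine isClosed_iInter fun ℓ => isClosed_iInter fun h => isClosed_eq ?_ ?_
    · exact Continuous.comp continuous_of_discreteTopology (continuous_apply (ℓ + 1))
    · exact continuous_apply ℓ
  haveI : CompactSpace (odometer p) := isCompact_iff_compactSpace.mp hclosed.isCompact
  have hU1 : Uset ξ p = ⋃ ℓ, XsetL ξ p 1 ℓ := rfl
  have hV0 : Vset ξ p = ⋃ ℓ, XsetL ξ p 0 ℓ := rfl
  have h10 : (1 : Fin 2) ≠ 0 := by decide
  have hclU : closure (Uset ξ p) = (Vset ξ p)ᶜ := by
    rw [hU1, hV0]; exact closure_Xunion hpos hd hex h10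
  have hclV : closure (Vset ξ p) = (Uset ξ p)ᶜ := by
    rw [hU1, hV0]; exact closure_Xunion hpos hd hex h10.symm
  have hint : interior (closure (Uset ξ p)) = Uset ξ p := by
    rw [hclU, interior_compl, hclV, compl_compl]
  refine ⟨closure (Uset ξ p), isClosed_closure.isCompact, by rw [hint], ?_, ?_⟩
  · ext n
    simp only [mem_setOf_eq]
    rw [hclU, mem_compl_iff]
    constructor
    · intro hn
      by_contra hne
      have h0 : ξ n = 0 := fin2_eq_of_ne (by decide : (0 : Fin 2) ≠ 1) hne
      obtain ⟨ℓ, hℓ⟩ := hex n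
      exact hn (mem_iUnion.mpr ⟨ℓ, ⟨n, hℓ, h0, (smul_gen_coord p n ℓ).symm⟩⟩)
    · intro h1 hmem
      rw [hV0] at hmem
      obtain ⟨ℓ, k, hkP, hk0, hkc⟩ := mem_iUnion.mp hmem
      have hdvd : (p ℓ : ℤ) ∣ n - k := by
        have h2 : (k : ZMod (p ℓ)) = (n : ZMod (p ℓ)) := by
          rw [hkc, smul_gen_coord p n ℓ]
        exact ((ZMod.intCast_eq_intCast_iff _ _ _).mp h2).dvd
      have hval := (per_congr hkP hdvd).2
      rw [h1, hk0] at hval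
      exact absurd hval (by decide)
  · set g : ℕ → Set (odometer p) := fun ℓ => XsetL ξ p 1 ℓ ∪ XsetL ξ p 0 ℓ with hg
    have hgmono : Monotone g :=
      fun a b hab => union_subset_union (XsetL_mono hd 1 hab) (XsetL_mono hd 0 hab)
    have hgmeas : ∀ ℓ, MeasurableSet (g ℓ) :=
      fun ℓ => (measurableSet_XsetL 1 ℓ).union (measurableSet_XsetL 0 ℓ)
    have hgU : (⋃ ℓ, g ℓ) = Uset ξ p ∪ Vset ξ p := by
      rw [hU1, hV0, hg, iUnion_union_distrib]
    have hgval : ∀ ℓ, μ (g ℓ)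
        = (((Aset ξ p ℓ 1 ∪ Aset ξ p ℓ 0).ncard : ℝ≥0∞)) * (p ℓ : ℝ≥0∞)⁻¹ := by
      intro ℓ
      have hpre : g ℓ = (fun x : odometer p => (x : ∀ ℓ, ZMod (p ℓ)) ℓ) ⁻¹'
          (Aset ξ p ℓ 1 ∪ Aset ξ p ℓ 0) := rfl
      rw [hpre, preimage_measure hpos μ ℓ _]
    have hD : ∀ ℓ, skelDensity ξ (p ℓ) = (μ (g ℓ)).toReal := by
      intro ℓ
      rw [hgval ℓ, skelDensity, ncard_per_eq hpos ℓ, union_comm (Aset ξ p ℓ 0)]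
      rw [ENNReal.toReal_mul, ENNReal.toReal_inv]
      simp [div_eq_mul_inv]
    have hne : μ (⋃ ℓ, g ℓ) ≠ ⊤ := measure_ne_top μ _
    refine ⟨(μ (⋃ ℓ, g ℓ)).toReal, ?_, ?_, ?_, ?_⟩
    · have h1 : Tendsto (fun ℓ => μ (g ℓ)) atTop (𝓝 (μ (⋃ ℓ, g ℓ))) :=
        tendsto_measure_iUnion_atTop hgmono
      exact ((ENNReal.tendsto_toReal hne).comp h1).congr (fun ℓ => (hD ℓ).symm)
    · intro a b hab
      show skelDensity ξ (p a) ≤ skelDensity ξ (p b)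
      rw [hD a, hD b]
      exact ENNReal.toReal_mono (measure_ne_top μ _) (measure_mono (hgmono hab))
    · intro ℓ
      rw [hD ℓ]
      have hle : μ (g ℓ) ≤ 1 := prob_le_one
      simpa using ENNReal.toReal_mono (by simp) hle
    · have hfr : frontier (closure (Uset ξ p)) = (⋃ ℓ, g ℓ)ᶜ := by
        rw [← closure_diff_interior, closure_closure, hint, hclU, hgU]
        ext x
        simp only [mem_diff, mem_compl_iff, mem_union]
        tauto
      rw [hfr, measure_compl (MeasurableSet.iUnion hgmeas) hne, measure_univ]
      rw [ENNReal.ofReal_sub _ ENNReal.toReal_nonneg, ENNReal.ofReal_one,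
        ENNReal.ofReal_toReal hne]
end
end

section
/- Let ξ : ℤ → {0,1} be a non-periodic Toeplitz sequence with period structure (p_ℓ)_{ℓ≥1}, Ω the associated odometer, and W = cl(U) the window constructed from ξ. Then W is compact, the interior of W equals U, and consequently W = cl(int(W)), i.e. W is a proper window. -/
open MeasureTheory Set Filter Topology

noncomputable section

section ToeplitzAux

variable {ξ : ℤ → Fin 2} {p : ℕ → ℕ}

lemma ZW_compat (hps : IsPeriodStructure ξ p) {x : Π ℓ, ZMod (p ℓ)}
    (hx : x ∈ odometer p) {ℓ m : ℕ} (h : ℓ ≤ m) {k : ℤ}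
    (hk : (k : ZMod (p m)) = x m) : (k : ZMod (p ℓ)) = x ℓ := by
  induction m, h using Nat.le_induction with
  | base => exact hk
  | succ n hn ih =>
    apply ih
    have hxn := hx n (hps.2.1 n)
    rw [← hxn, ← hk, map_intCast]

lemma ZW_smul_coe (p : ℕ → ℕ) (k : ℤ) (ℓ : ℕ) :
    ((k • odometerGen p : odometer p) : Π ℓ, ZMod (p ℓ)) ℓ = (k : ZMod (p ℓ)) := by
  have : ((k • odometerGen p : odometer p) : Π ℓ, ZMod (p ℓ)) = k • (odometerGen p : Π ℓ, ZMod (p ℓ)) := rfl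
  rw [this]
  simp [odometerGen, zsmul_eq_mul]

lemma ZW_per_congr {ℓ : ℕ} {k k' : ℤ} (hk : k ∈ Per ξ (p ℓ))
    (h : (k' : ZMod (p ℓ)) = (k : ZMod (p ℓ))) : ξ k' = ξ k := by
  have hmod : k ≡ k' [ZMOD (p ℓ)] := (ZMod.intCast_eq_intCast_iff _ _ _).mp h.symm
  obtain ⟨n, hn⟩ := Int.ModEq.dvd hmod
  have : k' = k + n * (p ℓ) := by linarith
  rw [this]
  exact hk n

lemma ZW_fin2 {a : Fin 2} (h : a ≠ 1) : a = 0 := by omega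

lemma ZW_disjoint (hps : IsPeriodStructure ξ p) :
    ∀ x : odometer p, x ∈ Uset ξ p → x ∈ Vset ξ p → False := by
  intro x hU hV
  obtain ⟨_, ⟨ℓ, rfl⟩, k, hkP, hk1, hkx⟩ := hU
  obtain ⟨_, ⟨m, rfl⟩, k', hkP', hk0, hkx'⟩ := hV
  rcases le_total ℓ m with h | h
  · have h2 : ((k' : ℤ) : ZMod (p ℓ)) = (x : Π ℓ, ZMod (p ℓ)) ℓ := ZW_compat hps x.2 h hkx'
    have := ZW_per_congr hkP (h2.trans hkx.symm)
    rw [hk0, hk1] at this; exact absurd this (by decide)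
  · have h2 : ((k : ℤ) : ZMod (p m)) = (x : Π ℓ, ZMod (p ℓ)) m := ZW_compat hps x.2 h hkx
    have := ZW_per_congr hkP' (h2.trans hkx'.symm)
    rw [hk0, hk1] at this; exact absurd this (by decide)

lemma ZW_open_U (ξ : ℤ → Fin 2) (p : ℕ → ℕ) : IsOpen (Uset ξ p) := by
  refine isOpen_iUnion fun ℓ => ?_
  exact (isOpen_discrete (Aset ξ p ℓ 1)).preimage ((continuous_apply ℓ).comp continuous_subtype_val)

lemma ZW_open_V (ξ : ℤ → Fin 2) (p : ℕ → ℕ) : IsOpen (Vset ξ p) := by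
  refine isOpen_iUnion fun ℓ => ?_
  exact (isOpen_discrete (Aset ξ p ℓ 0)).preimage ((continuous_apply ℓ).comp continuous_subtype_val)

/-- Cylinder basis: any open set containing `z` contains the cylinder at some level `m`. -/
lemma ZW_cylinder (hps : IsPeriodStructure ξ p) {O : Set (odometer p)} (hO : IsOpen O)
    {z : odometer p} (hz : z ∈ O) :
    ∃ m, ∀ y : odometer p, (y : Π ℓ, ZMod (p ℓ)) m = (z : Π ℓ, ZMod (p ℓ)) m → y ∈ O := by
  rw [isOpen_induced_iff] at hO
  obtain ⟨O', hO', rfl⟩ := hO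
  rw [isOpen_pi_iff] at hO'
  obtain ⟨I, u, hu, hsub⟩ := hO' _ hz
  refine ⟨I.sup id, fun y hy => ?_⟩
  apply hsub
  intro i hi
  have him : i ≤ I.sup id := Finset.le_sup (f := id) hi
  haveI : NeZero (p (I.sup id)) := ⟨(hps.1 _).ne'⟩
  set c : ℤ := ZMod.cast ((z : Π ℓ, ZMod (p ℓ)) (I.sup id)) with hc
  have hcz : (c : ZMod (p (I.sup id))) = (z : Π ℓ, ZMod (p ℓ)) (I.sup id) :=
    ZMod.intCast_zmod_cast _
  have h1 : (c : ZMod (p i)) = (z : Π ℓ, ZMod (p ℓ)) i := ZW_compat hps z.2 him hcz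
  have h2 : (c : ZMod (p i)) = (y : Π ℓ, ZMod (p ℓ)) i :=
    ZW_compat hps y.2 him (hcz.trans hy.symm)
  rw [← h2, h1]
  exact (hu i hi).2

end ToeplitzAux

/-- For a non-periodic Toeplitz sequence `ξ` with period structure
`(p ℓ)`, the window `W = cl U` in the associated odometer is compact, has interior
equal to `U`, and satisfies `W = cl (int W)`, i.e. it is a proper window. -/
theorem toeplitz_window_proper (ξ : ℤ → Fin 2) (hT : IsToeplitz ξ) (hNP : IsNonPeriodic ξ)
    (p : ℕ → ℕ) (hps : IsPeriodStructure ξ p) :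
    IsCompact (Wset ξ p) ∧ interior (Wset ξ p) = Uset ξ p ∧
      Wset ξ p = closure (interior (Wset ξ p)) := by
  haveI : ∀ ℓ, CompactSpace (ZMod (p ℓ)) := fun ℓ => by
    haveI : NeZero (p ℓ) := ⟨(hps.1 ℓ).ne'⟩
    exact Finite.compactSpace
  have hclosed : IsClosed ((odometer p : Set (Π ℓ, ZMod (p ℓ)))) := by
    have heq : (odometer p : Set (Π ℓ, ZMod (p ℓ))) =
        ⋂ ℓ, ⋂ (h : p ℓ ∣ p (ℓ + 1)),
          {x : Π ℓ, ZMod (p ℓ) | ZMod.castHom h (ZMod (p ℓ)) (x (ℓ + 1)) = x ℓ} := by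
      ext x
      simp only [SetLike.mem_coe, Set.mem_iInter, Set.mem_setOf_eq]
      rfl
    rw [heq]
    refine isClosed_iInter fun ℓ => isClosed_iInter fun h => ?_
    exact isClosed_eq ((continuous_of_discreteTopology).comp (continuous_apply (ℓ + 1)))
      (continuous_apply ℓ)
  haveI : CompactSpace (odometer p) := isCompact_iff_compactSpace.mp hclosed.isCompact
  have hcompact : IsCompact (Wset ξ p) := isClosed_closure.isCompact
  have hWV : Wset ξ p ⊆ (Vset ξ p)ᶜ :=
    closure_minimal (fun x hx hxV => ZW_disjoint hps x hx hxV)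
      (ZW_open_V ξ p).isClosed_compl
  have hIntU : interior (Wset ξ p) = Uset ξ p := by
    apply Set.Subset.antisymm
    · intro z hz
      obtain ⟨m, hm⟩ := ZW_cylinder hps isOpen_interior hz
      -- every integer congruent to z_m mod p_m has ξ-value 1
      have hall : ∀ k : ℤ, (k : ZMod (p m)) = (z : Π ℓ, ZMod (p ℓ)) m → ξ k = 1 := by
        intro k hk
        by_contra hne
        have hk0 : ξ k = 0 := ZW_fin2 hne
        obtain ⟨ℓ, hkP⟩ := hps.2.2 k
        have hy : (k • odometerGen p) ∈ interior (Wset ξ p) := by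
          apply hm
          rw [ZW_smul_coe p k m, hk]
        have hyW : (k • odometerGen p) ∈ Wset ξ p := interior_subset hy
        have hyV : (k • odometerGen p) ∈ Vset ξ p := by
          refine Set.mem_iUnion.mpr ⟨ℓ, k, hkP, hk0, ?_⟩
          exact (ZW_smul_coe p k ℓ).symm
        exact hWV hyW hyV
      haveI : NeZero (p m) := ⟨(hps.1 m).ne'⟩
      set k₀ : ℤ := ZMod.cast ((z : Π ℓ, ZMod (p ℓ)) m) with hk₀def
      have hk₀ : (k₀ : ZMod (p m)) = (z : Π ℓ, ZMod (p ℓ)) m := ZMod.intCast_zmod_cast _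
      have hk₀P : k₀ ∈ Per ξ (p m) := by
        intro n
        have h1 : ξ (k₀ + n * (p m)) = 1 := by
          apply hall
          push_cast
          rw [ZMod.natCast_self]
          simpa using hk₀
        rw [h1, hall k₀ hk₀]
      exact Set.mem_iUnion.mpr ⟨m, k₀, hk₀P, hall k₀ hk₀, hk₀⟩
    · exact interior_maximal subset_closure (ZW_open_U ξ p)
  refine ⟨hcompact, hIntU, ?_⟩
  rw [hIntU]
  rfl
end
end

section
/- Let ξ : ℤ → {0,1} be a Toeplitz sequence with period structure (p_ℓ)_{ℓ≥1}, Ω the associated odometer with distinguished element e, and U, V the sets constructed from ξ. Then: (i) U and V are disjoint open subsets of Ω; (ii) for every k ∈ ℤ, if ξ(k) = 1 then k·e ∈ U, and if ξ(k) = 0 then k·e ∈ V. -/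
open MeasureTheory Set Filter Topology

noncomputable section

/-- For a Toeplitz sequence `ξ` with period structure `(p ℓ)` and
distinguished odometer element `e`: (i) `U` and `V` are disjoint open sets;
(ii) if `ξ k = 1` then `k • e ∈ U`, and if `ξ k = 0` then `k • e ∈ V`. -/
theorem toeplitz_UV_open_disjoint (ξ : ℤ → Fin 2) (hT : IsToeplitz ξ)
    (p : ℕ → ℕ) (hps : IsPeriodStructure ξ p) :
    Disjoint (Uset ξ p) (Vset ξ p) ∧ IsOpen (Uset ξ p) ∧ IsOpen (Vset ξ p) ∧
      ∀ k : ℤ, (ξ k = 1 → k • odometerGen p ∈ Uset ξ p) ∧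
        (ξ k = 0 → k • odometerGen p ∈ Vset ξ p) := by
  obtain ⟨hpos, hdvd, hper⟩ := hps
  -- downward coordinate compatibility
  have hcoord : ∀ (x : odometer p) (m : ℕ) (j : ℤ),
      (x : Π i, ZMod (p i)) m = (j : ZMod (p m)) →
      ∀ ℓ ≤ m, (x : Π i, ZMod (p i)) ℓ = (j : ZMod (p ℓ)) := by
    intro x m j
    induction m with
    | zero =>
      intro hm ℓ hℓ
      obtain rfl : ℓ = 0 := Nat.le_zero.mp hℓ
      exact hm
    | succ m ih =>
      intro hm ℓ hℓ
      rcases Nat.lt_or_ge ℓ (m + 1) with h | h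
      · have hxm : (x : Π i, ZMod (p i)) m = (j : ZMod (p m)) := by
          have h2 := x.2 m (hdvd m)
          rw [hm, map_intCast] at h2
          exact h2.symm
        exact ih hxm ℓ (Nat.lt_succ_iff.mp h)
      · obtain rfl : ℓ = m + 1 := le_antisymm hℓ h
        exact hm
  have key : ∀ (x : odometer p) (ℓ m : ℕ) (k j : ℤ), ℓ ≤ m →
      k ∈ Per ξ (p ℓ) → (x : Π i, ZMod (p i)) ℓ = (k : ZMod (p ℓ)) →
      (x : Π i, ZMod (p i)) m = (j : ZMod (p m)) → ξ j = ξ k := by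
    intro x ℓ m k j hlm hkP hxℓ hxm
    have h1 : (x : Π i, ZMod (p i)) ℓ = (j : ZMod (p ℓ)) := hcoord x m j hxm ℓ hlm
    have h2 : (k : ZMod (p ℓ)) = (j : ZMod (p ℓ)) := by rw [← hxℓ, h1]
    have h3 : k ≡ j [ZMOD (p ℓ)] := (ZMod.intCast_eq_intCast_iff _ _ _).mp h2
    obtain ⟨n, hn⟩ := Int.ModEq.dvd h3.symm
    have hj : j = k + (-n) * (p ℓ) := by linear_combination -hn
    rw [hj, hkP (-n)]
  refine ⟨?_, ?_, ?_, ?_⟩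
  · rw [Set.disjoint_left]
    rintro x hU hV
    obtain ⟨ℓ, kU, hkUP, hkU1, hkUx⟩ := Set.mem_iUnion.mp hU
    obtain ⟨m, kV, hkVP, hkV0, hkVx⟩ := Set.mem_iUnion.mp hV
    rcases le_total ℓ m with h | h
    · have := key x ℓ m kU kV h hkUP hkUx.symm hkVx.symm
      rw [hkU1, hkV0] at this; exact absurd this (by decide)
    · have := key x m ℓ kV kU h hkVP hkVx.symm hkUx.symm
      rw [hkU1, hkV0] at this; exact absurd this (by decide)
  · exact isOpen_iUnion fun ℓ =>
      (isOpen_discrete _).preimage ((continuous_apply ℓ).comp continuous_subtype_val)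
  · exact isOpen_iUnion fun ℓ =>
      (isOpen_discrete _).preimage ((continuous_apply ℓ).comp continuous_subtype_val)
  · intro k
    have hcoe : ∀ ℓ, ((k • odometerGen p : odometer p) : Π i, ZMod (p i)) ℓ
        = (k : ZMod (p ℓ)) := by
      intro ℓ
      simp [odometerGen, zsmul_one]
    constructor
    · intro hk
      obtain ⟨ℓ, hℓ⟩ := hper k
      exact Set.mem_iUnion.mpr ⟨ℓ, ⟨k, hℓ, hk, (hcoe ℓ).symm⟩⟩
    · intro hk
      obtain ⟨ℓ, hℓ⟩ := hper k
      exact Set.mem_iUnion.mpr ⟨ℓ, ⟨k, hℓ, hk, (hcoe ℓ).symm⟩⟩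
end
end

section
/- Let ξ : ℤ → {0,1} be a non-periodic Toeplitz sequence with period structure (p_ℓ)_{ℓ≥1}, Ω the associated odometer, and U, V the sets constructed from ξ. Then cl(U) = Ω \ V and cl(V) = Ω \ U, where cl denotes closure in Ω. -/
open MeasureTheory Set Filter Topology

noncomputable section

lemma per_mono {ξ : ℤ → Fin 2} {a b : ℕ} (h : a ∣ b) {k : ℤ} (hk : k ∈ Per ξ a) :
    k ∈ Per ξ b := by
  intro n
  obtain ⟨c, rfl⟩ := h
  have h2 := hk (n * c)
  rw [show k + n * ((a * c : ℕ) : ℤ) = k + n * c * a by push_cast; ring]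
  exact h2

lemma hdvd_of_chain {p : ℕ → ℕ} (hd : ∀ ℓ, p ℓ ∣ p (ℓ + 1)) :
    ∀ {ℓ m : ℕ}, ℓ ≤ m → p ℓ ∣ p m := by
  intro ℓ m h
  induction h with
  | refl => exact dvd_rfl
  | step _ ih => exact ih.trans (hd _)

lemma odometer_compat {p : ℕ → ℕ} (hd : ∀ ℓ, p ℓ ∣ p (ℓ + 1)) (x : odometer p) :
    ∀ {ℓ m : ℕ}, ℓ ≤ m → ∀ k : ℤ, (k : ZMod (p m)) = (x : Π i, ZMod (p i)) m →
      (k : ZMod (p ℓ)) = (x : Π i, ZMod (p i)) ℓ := by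
  intro ℓ m h
  induction h with
  | refl => exact fun k hk => hk
  | @step n _ ih =>
      intro k hk
      have hx := x.2 n (hd n)
      rw [← hk, map_intCast] at hx
      exact ih k hx

lemma fin2_other {a s t : Fin 2} (hst : s ≠ t) (h : a ≠ s) : a = t := by
  revert hst h
  revert a s t
  decide

lemma exists_good {ξ : ℤ → Fin 2} {p : ℕ → ℕ} (hps : IsPeriodStructure ξ p)
    (x : odometer p) (s t : Fin 2) (hst : s ≠ t)
    (hx : ∀ ℓ, (x : Π i, ZMod (p i)) ℓ ∉ Aset ξ p ℓ t) (L : ℕ) :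
    ∃ m k, L ≤ m ∧ k ∈ Per ξ (p m) ∧ ξ k = s ∧
      (k : ZMod (p L)) = (x : Π i, ZMod (p i)) L := by
  obtain ⟨hpos, hd, hcov⟩ := hps
  by_cases hcase : ∃ j : ℤ, (j : ZMod (p L)) = (x : Π i, ZMod (p i)) L ∧ ξ j = s
  · obtain ⟨j, hj1, hj2⟩ := hcase
    obtain ⟨m₀, hm₀⟩ := hcov j
    refine ⟨max L m₀, j, le_max_left _ _, per_mono (hdvd_of_chain hd (le_max_right L m₀)) hm₀,
      hj2, hj1⟩
  · exfalso
    push_neg at hcase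
    haveI : NeZero (p L) := ⟨(hpos L).ne'⟩
    set a : ZMod (p L) := (x : Π i, ZMod (p i)) L with ha
    set k₀ : ℤ := (a.val : ℤ) with hk₀
    have hk₀a : (k₀ : ZMod (p L)) = a := by
      rw [hk₀]; push_cast; exact ZMod.natCast_rightInverse a
    have hall : ∀ j : ℤ, (j : ZMod (p L)) = a → ξ j = t := by
      intro j hj
      exact fin2_other hst (hcase j hj)
    have hper : k₀ ∈ Per ξ (p L) := by
      intro n
      set j : ℤ := k₀ + n * (p L : ℤ) with hj
      have h1 : (j : ZMod (p L)) = a := by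
        rw [hj]
        push_cast [ZMod.natCast_self]
        simpa using hk₀a
      rw [hall j h1, hall k₀ hk₀a]
    exact hx L ⟨k₀, hper, hall k₀ hk₀a, hk₀a⟩

lemma disj_aux {ξ : ℤ → Fin 2} {p : ℕ → ℕ} (hd : ∀ ℓ, p ℓ ∣ p (ℓ + 1))
    (x : odometer p) {ℓ m : ℕ} (h : ℓ ≤ m) {s t : Fin 2} (hst : s ≠ t)
    (h1 : (x : Π i, ZMod (p i)) ℓ ∈ Aset ξ p ℓ s)
    (h2 : (x : Π i, ZMod (p i)) m ∈ Aset ξ p m t) : False := by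
  obtain ⟨k, hkP, hks, hkc⟩ := h1
  obtain ⟨k', hk'P, hk't, hk'c⟩ := h2
  have hc : (k' : ZMod (p ℓ)) = (k : ZMod (p ℓ)) := by
    rw [odometer_compat hd x h k' hk'c, hkc]
  have hdvd : ((p ℓ : ℤ)) ∣ k' - k := by
    rw [← ZMod.intCast_zmod_eq_zero_iff_dvd]
    push_cast
    rw [hc, sub_self]
  obtain ⟨c, hcc⟩ := hdvd
  have hk'eq : k' = k + c * (p ℓ : ℤ) := by linarith
  rw [hk'eq, hkP c, hks] at hk't
  exact hst hk't

lemma closure_union_eq {ξ : ℤ → Fin 2} {p : ℕ → ℕ} (hps : IsPeriodStructure ξ p)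
    (s t : Fin 2) (hst : s ≠ t) :
    closure (⋃ ℓ, {x : odometer p | (x : Π i, ZMod (p i)) ℓ ∈ Aset ξ p ℓ s})
      = (⋃ ℓ, {x : odometer p | (x : Π i, ZMod (p i)) ℓ ∈ Aset ξ p ℓ t})ᶜ := by
  obtain ⟨hpos, hd, hcov⟩ := hps
  apply subset_antisymm
  · apply closure_minimal
    · intro x hxU hxV
      simp only [Set.mem_iUnion, Set.mem_setOf_eq] at hxU hxV
      obtain ⟨ℓ, hℓ⟩ := hxU
      obtain ⟨m, hm⟩ := hxV
      rcases le_total ℓ m with h | h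
      · exact disj_aux hd x h hst hℓ hm
      · exact disj_aux hd x h hst.symm hm hℓ
    · rw [isClosed_compl_iff]
      apply isOpen_iUnion
      intro ℓ
      have : ({x : odometer p | (x : Π i, ZMod (p i)) ℓ ∈ Aset ξ p ℓ t}) =
          (fun x : odometer p => (x : Π i, ZMod (p i)) ℓ) ⁻¹' (Aset ξ p ℓ t) := rfl
      rw [this]
      exact (((continuous_apply ℓ).comp continuous_subtype_val).isOpen_preimage _
        (isOpen_discrete _))
  · intro x hx
    rw [Set.mem_compl_iff, Set.mem_iUnion] at hx
    push_neg at hx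
    rw [mem_closure_iff]
    intro O hO hxO
    rw [isOpen_induced_iff] at hO
    obtain ⟨O', hO', rfl⟩ := hO
    obtain ⟨I, u, hIu, hpi⟩ := isOpen_pi_iff.mp hO' x.1 hxO
    set L : ℕ := I.sup id with hL
    obtain ⟨m, k, hLm, hkP, hks, hkc⟩ :=
      exists_good ⟨hpos, hd, hcov⟩ x s t hst hx L
    refine ⟨⟨fun i => (k : ZMod (p i)), fun i h => map_intCast _ k⟩, ?_, ?_⟩
    · apply hpi
      intro i hi
      have hiL : i ≤ L := Finset.le_sup (f := id) hi
      have hki : (k : ZMod (p i)) = (x : Π j, ZMod (p j)) i :=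
        odometer_compat hd x hiL k hkc
      show (k : ZMod (p i)) ∈ u i
      rw [hki]
      exact (hIu i hi).2
    · rw [Set.mem_iUnion]
      exact ⟨m, ⟨k, hkP, hks, rfl⟩⟩

/-- For a non-periodic Toeplitz sequence `ξ` with period structure
`(p ℓ)`, in the associated odometer one has `cl U = Ω \ V` and `cl V = Ω \ U`. -/
theorem toeplitz_closure_complement (ξ : ℤ → Fin 2) (hT : IsToeplitz ξ)
    (hNP : IsNonPeriodic ξ) (p : ℕ → ℕ) (hps : IsPeriodStructure ξ p) :
    closure (Uset ξ p) = (Vset ξ p)ᶜ ∧ closure (Vset ξ p) = (Uset ξ p)ᶜ := by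
  constructor
  · exact closure_union_eq hps (1 : Fin 2) 0 (by decide)
  · exact closure_union_eq hps (0 : Fin 2) 1 (by decide)
end
end

section
/- Let ξ : ℤ → {0,1} be a non-periodic Toeplitz sequence with period structure (p_ℓ)_{ℓ≥1}, Ω the associated odometer, and U_ℓ, V_ℓ, U, V, W = cl(U) the sets constructed from ξ. Then for every ℓ ≥ 1: (i) ∂W ⊆ Ω \ (U_ℓ ∪ V_ℓ); (ii) Ω \ (U_ℓ ∪ V_ℓ) is the union of the level-ℓ cylinders {x ∈ Ω : x_ℓ = c} with c ∉ A_0(ℓ) ∪ A_1(ℓ), and the number of such cylinders is exactly p_ℓ − #(Per(p_ℓ, ξ) ∩ [0, p_ℓ−1]) = (1 − D(p_ℓ))·p_ℓ. In particular, ∂W can be covered by (1 − D(p_ℓ))·p_ℓ level-ℓ cylinders. -/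
open MeasureTheory Set Filter Topology

noncomputable section

/-- Shifting by a multiple of `q` preserves membership in `Per ξ q` and the value of `ξ`. -/
lemma per_shift {ξ : ℤ → Fin 2} {q : ℕ} {k j : ℤ} (hk : k ∈ Per ξ q)
    (hd : (q : ℤ) ∣ j - k) : j ∈ Per ξ q ∧ ξ j = ξ k := by
  obtain ⟨n, hn⟩ := hd
  have hj : j = k + n * q := by linarith [hn]
  have hval : ξ j = ξ k := by rw [hj]; exact hk n
  refine ⟨fun m => ?_, hval⟩
  have h1 : ξ (k + (n + m) * q) = ξ k := hk (n + m)
  have h2 : j + m * q = k + (n + m) * q := by rw [hj]; ring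
  rw [h2, h1, hval]

/-- Coordinates of an element of the odometer are compatible. -/
lemma odo_compat {p : ℕ → ℕ} (hd : ∀ ℓ, p ℓ ∣ p (ℓ + 1)) (x : odometer p) (j : ℤ) :
    ∀ m ℓ : ℕ, ℓ ≤ m → ((j : ZMod (p m)) = (x : Π ℓ, ZMod (p ℓ)) m) →
      (j : ZMod (p ℓ)) = (x : Π ℓ, ZMod (p ℓ)) ℓ := by
  intro m
  induction m with
  | zero => intro ℓ hℓ h; obtain rfl : ℓ = 0 := Nat.le_zero.mp hℓ; exact h
  | succ m ih =>
      intro ℓ hℓ h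
      rcases Nat.lt_or_ge ℓ (m + 1) with hlt | hge
      · refine ih ℓ (Nat.lt_succ_iff.mp hlt) ?_
        have hx := x.2 m (hd m)
        have : ZMod.castHom (hd m) (ZMod (p m)) ((x : Π ℓ, ZMod (p ℓ)) (m + 1))
            = (x : Π ℓ, ZMod (p ℓ)) m := hx
        rw [← this, ← h, map_intCast]
      · obtain rfl : ℓ = m + 1 := le_antisymm hℓ hge
        exact h

/-- `V_ℓ` is disjoint from `U = ⋃ m, U_m`. -/
lemma vset_disjoint_uset {ξ : ℤ → Fin 2} {p : ℕ → ℕ} (hps : IsPeriodStructure ξ p)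
    (ℓ : ℕ) {x : odometer p} (hV : x ∈ VsetL ξ p ℓ) : x ∉ Uset ξ p := by
  intro hU
  obtain ⟨m, hm⟩ := Set.mem_iUnion.mp hU
  obtain ⟨k, hkPer, hk1, hkc⟩ := hm
  obtain ⟨k', hk'Per, hk'0, hk'c⟩ := hV
  obtain ⟨j, hj⟩ := ZMod.intCast_surjective ((x : Π ℓ, ZMod (p ℓ)) (max ℓ m))
  have hjℓ : (j : ZMod (p ℓ)) = (x : Π ℓ, ZMod (p ℓ)) ℓ :=
    odo_compat hps.2.1 x j (max ℓ m) ℓ (le_max_left _ _) hj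
  have hjm : (j : ZMod (p m)) = (x : Π ℓ, ZMod (p ℓ)) m :=
    odo_compat hps.2.1 x j (max ℓ m) m (le_max_right _ _) hj
  have hd0 : ((p ℓ : ℕ) : ℤ) ∣ j - k' := by
    have : (j : ZMod (p ℓ)) = (k' : ZMod (p ℓ)) := by rw [hjℓ, hk'c]
    rw [ZMod.intCast_eq_intCast_iff] at this
    exact Int.ModEq.dvd this.symm
  have hd1 : ((p m : ℕ) : ℤ) ∣ j - k := by
    have : (j : ZMod (p m)) = (k : ZMod (p m)) := by rw [hjm, hkc]
    rw [ZMod.intCast_eq_intCast_iff] at this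
    exact Int.ModEq.dvd this.symm
  have h0 : ξ j = 0 := by rw [(per_shift hk'Per hd0).2, hk'0]
  have h1 : ξ j = 1 := by rw [(per_shift hkPer hd1).2, hk1]
  rw [h0] at h1
  exact absurd h1 (by decide)

/-- `A_0(ℓ) ∪ A_1(ℓ)` is the image of `Per(p ℓ, ξ) ∩ [0, p ℓ)` under reduction mod `p ℓ`. -/
lemma aset_union_eq_image (ξ : ℤ → Fin 2) (p : ℕ → ℕ) (hps : IsPeriodStructure ξ p) (ℓ : ℕ) :
    Aset ξ p ℓ 0 ∪ Aset ξ p ℓ 1 =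
      (fun k : ℤ => (k : ZMod (p ℓ))) '' (Per ξ (p ℓ) ∩ Set.Ico (0 : ℤ) (p ℓ : ℤ)) := by
  have hpos : (0 : ℤ) < (p ℓ : ℤ) := by exact_mod_cast hps.1 ℓ
  ext c
  constructor
  · intro hc
    have : ∃ k : ℤ, k ∈ Per ξ (p ℓ) ∧ (k : ZMod (p ℓ)) = c := by
      rcases hc with ⟨k, hk, _, hkc⟩ | ⟨k, hk, _, hkc⟩ <;> exact ⟨k, hk, hkc⟩
    obtain ⟨k, hkPer, hkc⟩ := this
    refine ⟨k % (p ℓ : ℤ), ⟨?_, ?_⟩, ?_⟩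
    · exact (per_shift hkPer ⟨-(k / (p ℓ : ℤ)), by rw [Int.emod_def]; ring⟩).1
    · exact ⟨Int.emod_nonneg k hpos.ne', Int.emod_lt_of_pos k hpos⟩
    · show ((k % ((p ℓ : ℕ) : ℤ) : ℤ) : ZMod (p ℓ)) = c
      rw [ZMod.intCast_mod, hkc]
  · rintro ⟨k, ⟨hkPer, _⟩, rfl⟩
    have h2 : ξ k = 0 ∨ ξ k = 1 := by omega
    rcases h2 with h | h
    · exact Or.inl ⟨k, hkPer, h, rfl⟩
    · exact Or.inr ⟨k, hkPer, h, rfl⟩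

/-- Reduction mod `p ℓ` is injective on `[0, p ℓ)`. -/
lemma intCast_injOn_Ico (q : ℕ) (hq : 0 < q) :
    Set.InjOn (fun k : ℤ => (k : ZMod q)) (Set.Ico (0 : ℤ) (q : ℤ)) := by
  intro a ha b hb h
  have hd : ((q : ℕ) : ℤ) ∣ a - b := by
    rw [ZMod.intCast_eq_intCast_iff] at h
    exact Int.ModEq.dvd h.symm
  have hq' : (0 : ℤ) < (q : ℤ) := by exact_mod_cast hq
  have := Int.eq_zero_of_abs_lt_dvd hd (by
    rw [abs_lt]
    constructor <;> [linarith [ha.1, hb.2]; linarith [ha.2, hb.1]])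
  linarith

/-- For a non-periodic Toeplitz sequence `ξ` with period structure
`(p ℓ)` and window `W = cl U`: (i) `∂W ⊆ Ω \ (U_ℓ ∪ V_ℓ)`;
(ii) `Ω \ (U_ℓ ∪ V_ℓ)` is the union of the level-`ℓ` cylinders `{x : x ℓ = c}` with
`c ∉ A_0(ℓ) ∪ A_1(ℓ)`, whose number is exactly
`p ℓ - #(Per(p ℓ, ξ) ∩ [0, p ℓ - 1]) = (1 - D(p ℓ)) · p ℓ`.
In particular `∂W` is covered by `(1 - D(p ℓ)) · p ℓ` level-`ℓ` cylinders. -/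

theorem toeplitz_boundary_cover (ξ : ℤ → Fin 2) (hT : IsToeplitz ξ)
    (hNP : IsNonPeriodic ξ) (p : ℕ → ℕ) (hps : IsPeriodStructure ξ p) :
    ∀ ℓ : ℕ,
      frontier (Wset ξ p) ⊆ (UsetL ξ p ℓ ∪ VsetL ξ p ℓ)ᶜ ∧
      (UsetL ξ p ℓ ∪ VsetL ξ p ℓ)ᶜ =
        ⋃ c ∈ (Aset ξ p ℓ 0 ∪ Aset ξ p ℓ 1)ᶜ,
          {x : odometer p | (x : Π ℓ, ZMod (p ℓ)) ℓ = c} ∧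
      ((Aset ξ p ℓ 0 ∪ Aset ξ p ℓ 1)ᶜ : Set (ZMod (p ℓ))).ncard =
        p ℓ - (Per ξ (p ℓ) ∩ Set.Ico (0 : ℤ) (p ℓ : ℤ)).ncard ∧
      ((((Aset ξ p ℓ 0 ∪ Aset ξ p ℓ 1)ᶜ : Set (ZMod (p ℓ))).ncard : ℝ) =
        (1 - skelDensity ξ (p ℓ)) * p ℓ) := by
  intro ℓ
  have hpos : 0 < p ℓ := hps.1 ℓ
  haveI : NeZero (p ℓ) := ⟨hpos.ne'⟩
  -- openness of the two level sets
  have hcont : Continuous fun x : odometer p => (x : Π ℓ, ZMod (p ℓ)) ℓ :=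
    (continuous_apply ℓ).comp continuous_subtype_val
  have hUopen : IsOpen (UsetL ξ p ℓ) := (isOpen_discrete _).preimage hcont
  have hVopen : IsOpen (VsetL ξ p ℓ) := (isOpen_discrete _).preimage hcont
  -- counting
  have himg := aset_union_eq_image ξ p hps ℓ
  have hinjOn : Set.InjOn (fun k : ℤ => (k : ZMod (p ℓ)))
      (Per ξ (p ℓ) ∩ Set.Ico (0 : ℤ) (p ℓ : ℤ)) :=
    (intCast_injOn_Ico (p ℓ) hpos).mono Set.inter_subset_right
  have hcard : (Aset ξ p ℓ 0 ∪ Aset ξ p ℓ 1).ncard =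
      (Per ξ (p ℓ) ∩ Set.Ico (0 : ℤ) (p ℓ : ℤ)).ncard := by
    rw [himg, Set.ncard_image_of_injOn hinjOn]
  have hle : (Aset ξ p ℓ 0 ∪ Aset ξ p ℓ 1).ncard ≤ p ℓ := by
    have h := Set.ncard_le_ncard (Set.subset_univ (Aset ξ p ℓ 0 ∪ Aset ξ p ℓ 1)) Set.finite_univ
    rwa [Set.ncard_univ, Nat.card_zmod] at h
  have hsum : (Aset ξ p ℓ 0 ∪ Aset ξ p ℓ 1).ncard +
      ((Aset ξ p ℓ 0 ∪ Aset ξ p ℓ 1)ᶜ : Set (ZMod (p ℓ))).ncard = p ℓ := by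
    rw [Set.ncard_add_ncard_compl, Nat.card_zmod]
  have hcompl : ((Aset ξ p ℓ 0 ∪ Aset ξ p ℓ 1)ᶜ : Set (ZMod (p ℓ))).ncard =
      p ℓ - (Per ξ (p ℓ) ∩ Set.Ico (0 : ℤ) (p ℓ : ℤ)).ncard := by omega
  refine ⟨?_, ?_, hcompl, ?_⟩
  · -- (i) frontier W avoids U_ℓ ∪ V_ℓ
    intro x hx hmem
    rcases hmem with hU | hV
    · -- x ∈ U_ℓ ⊆ interior W, contradicting x ∈ frontier W
      have hsub : UsetL ξ p ℓ ⊆ Wset ξ p :=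
        (Set.subset_iUnion (UsetL ξ p) ℓ).trans subset_closure
      exact hx.2 (interior_maximal hsub hUopen hU)
    · -- x ∈ V_ℓ, which is open and disjoint from U, hence from W = cl U
      have hdisj : Uset ξ p ⊆ (VsetL ξ p ℓ)ᶜ := fun y hy hyV =>
        vset_disjoint_uset hps ℓ hyV hy
      have hW : Wset ξ p ⊆ (VsetL ξ p ℓ)ᶜ :=
        closure_minimal hdisj hVopen.isClosed_compl
      have hxW : x ∈ Wset ξ p := by
        have hcl : IsClosed (Wset ξ p) := isClosed_closure
        have := frontier_subset_closure (s := Wset ξ p) hx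
        rwa [hcl.closure_eq] at this
      exact hW hxW hV
  · -- (ii) the complement is the union of the level-ℓ cylinders
    ext x
    simp only [Set.mem_compl_iff, Set.mem_union, UsetL, VsetL, Set.mem_setOf_eq,
      Set.mem_iUnion, exists_prop]
    constructor
    · intro h
      push_neg at h
      exact ⟨(x : Π ℓ, ZMod (p ℓ)) ℓ, fun hc => hc.elim h.2 h.1, rfl⟩
    · rintro ⟨c, hc, rfl⟩ h
      exact hc (h.elim Or.inr Or.inl)
  · -- the real count
    have hle' : (Per ξ (p ℓ) ∩ Set.Ico (0 : ℤ) (p ℓ : ℤ)).ncard ≤ p ℓ := by omega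
    rw [hcompl, Nat.cast_sub hle', skelDensity]
    have hp0 : (p ℓ : ℝ) ≠ 0 := Nat.cast_ne_zero.mpr hpos.ne'
    field_simp
end
end
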